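/- Let m ≥ 4, 3 ≤ t ≤ m, and n ≥ t(t−1)/2 + m − t be integers. Then RS_{t,m}(n) = ⌈((t−3)n + t(t−1)/2 + m − t)/(t−2)⌉. -/

import Mathlib

open Finset in
/-- `χ` is an exact `r`-coloring of `[1,n]`: it maps `[1,n]` into the color set `[1,r]`
and uses all `r` colors. -/
def ExactColoring (n r : ℕ) (χ : ℕ → ℕ) : Prop :=
  (∀ x ∈ Finset.Icc 1 n, χ x ∈ Finset.Icc 1 r) ∧
  ∀ c ∈ Finset.Icc 1 r, ∃ x ∈ Finset.Icc 1 n, χ x = c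

open Finset in
/-- The tuple `a 1, …, a m` is a solution to `E_m : x₁ + ⋯ + x_{m-1} = x_m` within `[1,n]`
(repetitions among the entries are allowed). -/
def IsSolutionEm (m n : ℕ) (a : ℕ → ℕ) : Prop :=
  (∀ i ∈ Finset.Icc 1 m, a i ∈ Finset.Icc 1 n) ∧
  ∑ i ∈ Finset.Icc 1 (m - 1), a i = a m

open Finset in
/-- The solution `a 1, …, a m` is rainbow under `χ`: its colors are pairwise distinct. -/
def IsRainbow (m : ℕ) (χ a : ℕ → ℕ) : Prop :=
  ∀ i ∈ Finset.Icc 1 m, ∀ j ∈ Finset.Icc 1 m, i ≠ j → χ (a i) ≠ χ (a j)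

open Finset in
/-- The number of distinct colors used by the tuple `a 1, …, a m` under `χ`. -/
def colorsUsed (m : ℕ) (χ a : ℕ → ℕ) : ℕ :=
  ((Finset.Icc 1 m).image fun i => χ (a i)).card

/-- Every exact `r`-coloring of `[1,n]` contains a rainbow solution to `E_m`. -/
def HasRainbowProp (m n r : ℕ) : Prop :=
  ∀ χ : ℕ → ℕ, ExactColoring n r χ →
    ∃ a : ℕ → ℕ, IsSolutionEm m n a ∧ IsRainbow m χ a

/-- Every exact `r`-coloring of `[1,n]` contains a solution to `E_m` using at least `t` colors. -/
def HasWeakProp (m t n r : ℕ) : Prop :=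
  ∀ χ : ℕ → ℕ, ExactColoring n r χ →
    ∃ a : ℕ → ℕ, IsSolutionEm m n a ∧ t ≤ colorsUsed m χ a


section WRSVAux
open Finset


lemma listSumRange (L : List ℕ) : ∑ j ∈ Finset.range L.length, L.getD j 1 = L.sum := by
  induction L with
  | nil => simp
  | cons a L ih =>
    rw [List.length_cons, Finset.sum_range_succ']
    simp only [List.getD_cons_succ, List.getD_cons_zero, List.sum_cons, ih]
    omega

lemma sum_ge_distinct (g : ℕ) (K : Finset ℕ) (hK : ∀ x ∈ K, g + 1 ≤ x) :
    2 * K.card * g + K.card * (K.card + 1) ≤ 2 * ∑ x ∈ K, x := by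
  generalize hn : K.card = k
  induction k generalizing K with
  | zero => simp [Finset.card_eq_zero.mp hn]
  | succ k ih =>
    have hne : K.Nonempty := Finset.card_pos.mp (by omega)
    set M := K.max' hne with hM
    have hMK : M ∈ K := K.max'_mem hne
    have hsub : K ⊆ Finset.Icc (g+1) M := by
      intro x hx; simp only [Finset.mem_Icc]; exact ⟨hK x hx, K.le_max' x hx⟩
    have hcard : K.card ≤ M - g := by
      calc K.card ≤ (Finset.Icc (g+1) M).card := Finset.card_le_card hsub
        _ = M - g := by rw [Nat.card_Icc]; omega
    have hKe : (K.erase M).card = k := by rw [Finset.card_erase_of_mem hMK, hn]; omega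
    have ihe := ih (K.erase M) (fun x hx => hK x (Finset.mem_of_mem_erase hx)) hKe
    have hsum : ∑ x ∈ K.erase M, x + M = ∑ x ∈ K, x := Finset.sum_erase_add K _ hMK
    have hgk : g + (k+1) ≤ M := by omega
    nlinarith [ihe]

lemma sum_le_distinct (Q : ℕ) (K : Finset ℕ) (hK : ∀ x ∈ K, x ≤ Q) :
    2 * ∑ x ∈ K, x + K.card * (K.card - 1) ≤ 2 * K.card * Q := by
  generalize hn : K.card = k
  induction k generalizing K with
  | zero => simp [Finset.card_eq_zero.mp hn]
  | succ k ih =>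
    have hne : K.Nonempty := Finset.card_pos.mp (by omega)
    set M := K.min' hne with hM
    have hMK : M ∈ K := K.min'_mem hne
    have hsub : K ⊆ Finset.Icc M Q := by
      intro x hx; simp only [Finset.mem_Icc]; exact ⟨K.min'_le x hx, hK x hx⟩
    have hcard : K.card ≤ Q + 1 - M := by
      calc K.card ≤ (Finset.Icc M Q).card := Finset.card_le_card hsub
        _ = Q + 1 - M := by rw [Nat.card_Icc]
    have hKe : (K.erase M).card = k := by rw [Finset.card_erase_of_mem hMK, hn]; omega
    have ihe := ih (K.erase M) (fun x hx => hK x (Finset.mem_of_mem_erase hx)) hKe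
    have hsum : ∑ x ∈ K.erase M, x + M = ∑ x ∈ K, x := Finset.sum_erase_add K _ hMK
    have hMQ : M ≤ Q := hK M hMK
    have hgk : M + k ≤ Q := by omega
    have hkk : k*(k-1) + 2*k = (k+1)*k := by
      cases k with
      | zero => rfl
      | succ k => simp only [Nat.add_sub_cancel]; ring
    simp only [Nat.add_sub_cancel]
    nlinarith [ihe]

lemma fiberwise_sum (S : Finset ℕ) (f : ℕ → ℕ) (h1 : ∀ i ∈ S, 1 ≤ f i) :
    (∑ x ∈ S.image f, x) + S.card ≤ (∑ i ∈ S, f i) + (S.image f).card := by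
  induction S using Finset.induction with
  | empty => simp
  | @insert a S hx ih =>
    have h1' : ∀ i ∈ S, 1 ≤ f i := fun i hi => h1 i (Finset.mem_insert_of_mem hi)
    have ha1 : 1 ≤ f a := h1 a (Finset.mem_insert_self a S)
    have ihe := ih h1'
    rw [Finset.image_insert, Finset.sum_insert hx, Finset.card_insert_of_notMem hx]
    by_cases hfa : f a ∈ S.image f
    · rw [Finset.insert_eq_self.mpr hfa]
      omega
    · rw [Finset.sum_insert hfa, Finset.card_insert_of_notMem hfa]
      omega

lemma exists_bottom (M : Finset ℕ) (k : ℕ) (hk : k ≤ M.card) :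
    ∃ A ⊆ M, A.card = k ∧ ∀ a ∈ A, ∀ x ∈ M \ A, a < x := by
  induction k with
  | zero => exact ⟨∅, Finset.empty_subset M, rfl, by simp⟩
  | succ k ih =>
    obtain ⟨A, hAM, hAcard, hAlt⟩ := ih (by omega)
    have hne : (M \ A).Nonempty := by
      rw [← Finset.card_pos, Finset.card_sdiff_of_subset hAM]; omega
    set w := (M \ A).min' hne with hw
    have hwM : w ∈ M \ A := (M \ A).min'_mem hne
    have hwA : w ∉ A := (Finset.mem_sdiff.mp hwM).2
    refine ⟨insert w A, ?_, ?_, ?_⟩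
    · exact Finset.insert_subset (Finset.mem_sdiff.mp hwM).1 hAM
    · rw [Finset.card_insert_of_notMem hwA, hAcard]
    · intro a ha x hx
      have hxM : x ∈ M := (Finset.mem_sdiff.mp hx).1
      have hxA : x ∉ insert w A := (Finset.mem_sdiff.mp hx).2
      rcases Finset.mem_insert.mp ha with rfl | haA
      · have : x ∈ M \ A := Finset.mem_sdiff.mpr ⟨hxM, fun h => hxA (Finset.mem_insert_of_mem h)⟩
        have := (M \ A).min'_le x this
        have hne2 : x ≠ w := fun h => hxA (h ▸ Finset.mem_insert_self w A)
        omega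
      · exact hAlt a haA x (Finset.mem_sdiff.mpr ⟨hxM, fun h => hxA (Finset.mem_insert_of_mem h)⟩)

lemma exists_sol (χ : ℕ → ℕ) (m n : ℕ) (hm : 4 ≤ m) (hn : 1 ≤ n)
    (A : Finset ℕ) (k : ℕ) (hA : A.card = k) (hkm : k + 3 ≤ m)
    (hAn : ∀ v ∈ A, v ∈ Finset.Icc 1 n) (y x : ℕ)
    (hy1 : 1 ≤ y) (hyn : y ≤ n) (hxn : x ≤ n)
    (hsum : (∑ v ∈ A, v) + (m - 2 - k) + y = x) :
    ∃ a : ℕ → ℕ, IsSolutionEm m n a ∧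
      insert (χ 1) ((A.image χ) ∪ {χ y, χ x}) ⊆ (Finset.Icc 1 m).image (fun i => χ (a i)) := by
  set L := A.toList with hLdef
  have hLlen : L.length = k := by rw [hLdef, Finset.length_toList, hA]
  have hLsum : L.sum = ∑ v ∈ A, v := by
    rw [hLdef]
    show A.val.toList.sum = _
    rw [Multiset.sum_toList]
    rw [Finset.sum_eq_multiset_sum, Multiset.map_id']
  have hLmem : ∀ v ∈ L, v ∈ A := fun v hv => Finset.mem_toList.mp hv
  set q := m - 2 - k with hq
  have hq1 : 1 ≤ q := by omega
  set a : ℕ → ℕ := fun i =>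
    if i ≤ q then 1 else if i ≤ m - 2 then L.getD (i - q - 1) 1
    else if i = m - 1 then y else if i = m then x else 1 with ha
  have ham : a m = x := by
    rw [ha]; simp only []
    rw [if_neg (by omega : ¬ (m ≤ q)), if_neg (by omega : ¬ (m ≤ m - 2)),
      if_neg (by omega : ¬ (m = m - 1))]
    simp
  have hamy : a (m-1) = y := by
    rw [ha]; simp only []
    rw [if_neg (by omega : ¬ (m - 1 ≤ q)), if_neg (by omega : ¬ (m - 1 ≤ m - 2))]
    simp
  have haval : ∀ i, 1 ≤ i → i ≤ m → a i ∈ Finset.Icc 1 n := by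
    intro i hi1 him
    by_cases h1 : i ≤ q
    · rw [ha]; simp only []; rw [if_pos h1, Finset.mem_Icc]; omega
    · by_cases h2 : i ≤ m - 2
      · rw [ha]; simp only []; rw [if_neg h1, if_pos h2]
        have hidx : i - q - 1 < L.length := by omega
        rw [List.getD_eq_getElem L 1 hidx]
        exact hAn _ (hLmem _ (List.getElem_mem hidx))
      · by_cases h3 : i = m - 1
        · rw [h3, hamy, Finset.mem_Icc]; omega
        · have h4 : i = m := by omega
          rw [h4, ham, Finset.mem_Icc]; omega
  have hsum1 : ∑ i ∈ Finset.Icc 1 (m-1), a i = x := by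
    have hIcc : Finset.Icc 1 (m-1) = Finset.Ioc 0 (m-1) := by
      ext i; simp [Finset.mem_Icc, Finset.mem_Ioc]; omega
    rw [hIcc]
    rw [← Finset.sum_Ioc_consecutive a (by omega : (0:ℕ) ≤ m - 2) (by omega : m - 2 ≤ m - 1)]
    rw [← Finset.sum_Ioc_consecutive a (by omega : (0:ℕ) ≤ q) (by omega : q ≤ m - 2)]
    have hp1 : ∑ i ∈ Finset.Ioc 0 q, a i = q := by
      rw [Finset.sum_congr rfl (g := fun _ => 1)]
      · simp [Nat.card_Ioc]
      · intro i hi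
        rw [Finset.mem_Ioc] at hi
        rw [ha]; simp only []
        rw [if_pos hi.2]
    have hp2 : ∑ i ∈ Finset.Ioc q (m-2), a i = L.sum := by
      have hcg : ∀ i ∈ Finset.Ioc q (m-2), a i = L.getD (i - q - 1) 1 := by
        intro i hi
        rw [Finset.mem_Ioc] at hi
        rw [ha]; simp only []
        rw [if_neg (by omega), if_pos hi.2]
      rw [Finset.sum_congr rfl hcg]
      rw [← listSumRange L, hLlen]
      apply Finset.sum_nbij' (fun i => i - q - 1) (fun j => j + q + 1)
      · intro i hi; rw [Finset.mem_Ioc] at hi; rw [Finset.mem_range]; omega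
      · intro j hj; rw [Finset.mem_range] at hj; rw [Finset.mem_Ioc]; omega
      · intro i hi; rw [Finset.mem_Ioc] at hi; omega
      · intro j hj; rw [Finset.mem_range] at hj; omega
      · intro i hi; rfl
    have hp3 : ∑ i ∈ Finset.Ioc (m-2) (m-1), a i = y := by
      have hs : Finset.Ioc (m-2) (m-1) = {m-1} := by
        ext i; simp [Finset.mem_Ioc]; omega
      rw [hs, Finset.sum_singleton, hamy]
    rw [hp1, hp2, hp3, hLsum]
    omega
  refine ⟨a, ⟨fun i hi => haval i (Finset.mem_Icc.mp hi).1 (Finset.mem_Icc.mp hi).2,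
    by rw [hsum1, ham]⟩, ?_⟩
  intro c hc
  simp only [Finset.mem_insert, Finset.mem_union, Finset.mem_image, Finset.mem_singleton] at hc
  rw [Finset.mem_image]
  rcases hc with rfl | ⟨v, hv, rfl⟩ | rfl | rfl
  · refine ⟨1, Finset.mem_Icc.mpr ⟨le_refl 1, by omega⟩, ?_⟩
    rw [ha]; simp only []; rw [if_pos hq1]
  · obtain ⟨j, hj, hjv⟩ := List.mem_iff_getElem.mp
      (show v ∈ L by rw [hLdef]; exact Finset.mem_toList.mpr hv)
    rw [hLlen] at hj
    refine ⟨j + q + 1, Finset.mem_Icc.mpr ⟨by omega, by omega⟩, ?_⟩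
    rw [ha]; simp only []
    rw [if_neg (by omega), if_pos (by omega : j + q + 1 ≤ m - 2)]
    have hidx2 : j + q + 1 - q - 1 = j := by omega
    rw [hidx2, List.getD_eq_getElem L 1 (by omega)]
    rw [hjv]
  · exact ⟨m - 1, Finset.mem_Icc.mpr ⟨by omega, by omega⟩, by rw [hamy]⟩
  · exact ⟨m, Finset.mem_Icc.mpr ⟨by omega, le_refl m⟩, by rw [ham]⟩

lemma avoid_bound (m t n r : ℕ) (χ : ℕ → ℕ) (hm : 4 ≤ m) (ht : 3 ≤ t) (htm : t ≤ m)
    (hn : t * (t - 1) / 2 + m - t ≤ n) (hχ : ExactColoring n r χ)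
    (hav : ∀ a : ℕ → ℕ, IsSolutionEm m n a → colorsUsed m χ a < t) :
    (t - 2) * r + 1 ≤ (t - 3) * n + (t * (t - 1) / 2 + m - t) := by
  set T := t * (t - 1) / 2 with hTdef
  have hT2 : 2 * T = t * (t - 1) := by
    rw [hTdef]
    refine Nat.two_mul_div_two_of_even ?_
    have h : t - 1 + 1 = t := by omega
    have := Nat.even_mul_succ_self (t - 1)
    rwa [h, mul_comm] at this
  have h6 : 6 ≤ t * (t - 1) := by
    calc (6:ℕ) = 3 * 2 := rfl
    _ ≤ t * (t - 1) := Nat.mul_le_mul (by omega) (by omega)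
  have hT3 : 3 ≤ T := by omega
  have hn1 : 1 ≤ n := by omega
  -- trivial case of few colors
  by_cases hrt : r + 2 ≤ t
  · have h1 : (t - 2) * r ≤ (t - 2) * (t - 2) := Nat.mul_le_mul_left _ (by omega)
    have h2 : (t - 2) * (t - 2) + 1 ≤ (t - 2) * (t - 1) := by
      have : (t - 2) * (t - 1) = (t - 2) * (t - 2) + (t - 2) := by
        rw [← Nat.mul_succ]; congr 1; omega
      omega
    have hTt : t - 1 ≤ T := by
      have : 2 * (t - 1) ≤ t * (t - 1) := Nat.mul_le_mul_right _ (by omega)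
      omega
    have h3 : (t - 2) * (t - 1) ≤ (t - 2) * (T + m - t) := Nat.mul_le_mul_left _ (by omega)
    have h4 : (t - 2) * (T + m - t) ≤ (t - 3) * n + (T + m - t) := by
      have e1 : (t - 2) * (T + m - t) = (t - 3) * (T + m - t) + (T + m - t) := by
        rw [← Nat.succ_mul]; congr 1; omega
      have e2 : (t - 3) * (T + m - t) ≤ (t - 3) * n := Nat.mul_le_mul_left _ hn
      omega
    omega
  push_neg at hrt  -- t < r + 2, i.e. r ≥ t - 1
  -- minima setup
  have hne : ∀ c ∈ Finset.Icc 1 r, ((Finset.Icc 1 n).filter (fun x => χ x = c)).Nonempty := by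
    intro c hc
    obtain ⟨x, hx, hxc⟩ := hχ.2 c hc
    exact ⟨x, Finset.mem_filter.mpr ⟨hx, hxc⟩⟩
  set μ : ℕ → ℕ := fun c =>
    if h : ((Finset.Icc 1 n).filter (fun x => χ x = c)).Nonempty then
      ((Finset.Icc 1 n).filter (fun x => χ x = c)).min' h else 0 with hμdef
  have hμmem : ∀ c ∈ Finset.Icc 1 r, μ c ∈ Finset.Icc 1 n ∧ χ (μ c) = c := by
    intro c hc
    have h := hne c hc
    have : μ c = ((Finset.Icc 1 n).filter (fun x => χ x = c)).min' h := by
      rw [hμdef]; exact dif_pos h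
    rw [this]
    have hmem := Finset.min'_mem _ h
    exact ⟨(Finset.mem_filter.mp hmem).1, (Finset.mem_filter.mp hmem).2⟩
  have hμle : ∀ c ∈ Finset.Icc 1 r, ∀ x ∈ Finset.Icc 1 n, χ x = c → μ c ≤ x := by
    intro c hc x hx hxc
    have h := hne c hc
    have he : μ c = ((Finset.Icc 1 n).filter (fun x => χ x = c)).min' h := by
      rw [hμdef]; exact dif_pos h
    rw [he]
    exact Finset.min'_le ((Finset.Icc 1 n).filter (fun z => χ z = c)) x (Finset.mem_filter.mpr ⟨hx, hxc⟩)
  set b := χ 1 with hbdef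
  have h1n : (1:ℕ) ∈ Finset.Icc 1 n := Finset.mem_Icc.mpr ⟨le_refl 1, hn1⟩
  have hb : b ∈ Finset.Icc 1 r := hχ.1 1 h1n
  set M := ((Finset.Icc 1 r).erase b).image μ with hMdef
  have hMn : ∀ w ∈ M, w ∈ Finset.Icc 1 n ∧ χ w ≠ b ∧ χ w ∈ Finset.Icc 1 r := by
    intro w hw
    obtain ⟨c, hc, rfl⟩ := Finset.mem_image.mp hw
    have hc' : c ∈ Finset.Icc 1 r := Finset.mem_of_mem_erase hc
    have hcb : c ≠ b := Finset.ne_of_mem_erase hc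
    obtain ⟨h1, h2⟩ := hμmem c hc'
    exact ⟨h1, by rw [h2]; exact hcb, by rw [h2]; exact hc'⟩
  have hMmin : ∀ w ∈ M, ∀ z ∈ Finset.Icc 1 n, χ z = χ w → w ≤ z := by
    intro w hw z hz hzc
    obtain ⟨c, hc, rfl⟩ := Finset.mem_image.mp hw
    have hc' : c ∈ Finset.Icc 1 r := Finset.mem_of_mem_erase hc
    obtain ⟨h1, h2⟩ := hμmem c hc'
    exact hμle c hc' z hz (by rw [hzc, h2])
  have hMinj : ∀ w ∈ M, ∀ w' ∈ M, χ w = χ w' → w = w' := by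
    intro w hw w' hw' hww
    obtain ⟨hw1, _, hw3⟩ := hMn w hw
    obtain ⟨hw1', _, _⟩ := hMn w' hw'
    exact le_antisymm (hMmin w hw w' hw1' hww.symm) (hMmin w' hw' w hw1 hww)
  have hMcard : M.card = r - 1 := by
    rw [hMdef, Finset.card_image_of_injOn, Finset.card_erase_of_mem hb, Nat.card_Icc]
    · omega
    intro c hc c' hc' hcc
    have h1 := (hμmem c (Finset.mem_of_mem_erase hc)).2
    have h2 := (hμmem c' (Finset.mem_of_mem_erase hc')).2
    rw [← h1, ← h2, hcc]
  have hMIcc : ∀ w ∈ M, w ∈ Finset.Icc 1 n := fun w hw => (hMn w hw).1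
  -- two branches: t = 3 and t ≥ 4
  by_cases ht3 : t = 3
  · -- t = 3 : goal reduces to r + 1 ≤ m
    subst ht3
    have hT3' : T = 3 := by omega
    have hMne : M.Nonempty := by
      rw [← Finset.card_pos, hMcard]; omega
    set v1 := M.min' hMne with hv1def
    have hv1M : v1 ∈ M := M.min'_mem hMne
    have hEsub0 : M.erase v1 ⊆ Finset.Ioc v1 n := by
      intro w hw
      have hwM : w ∈ M := Finset.mem_of_mem_erase hw
      have h1 := M.min'_le w hwM
      have h2 : w ≠ v1 := Finset.ne_of_mem_erase hw
      rw [Finset.mem_Ioc]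
      exact ⟨by omega, (Finset.mem_Icc.mp (hMIcc w hwM)).2⟩
    have hEcard : (M.erase v1).card = r - 2 := by
      rw [Finset.card_erase_of_mem hv1M, hMcard]; omega
    by_cases hc1 : n + 1 ≤ v1 + (m - 2)
    · have := Finset.card_le_card hEsub0
      rw [hEcard, Nat.card_Ioc] at this
      simp only [show (3:ℕ) - 2 = 1 by rfl, show (3:ℕ) - 3 = 0 by rfl]
      omega
    · push_neg at hc1
      have hkey : ∀ w ∈ M.erase v1, w ≤ v1 + (m - 3) := by
        intro w hw
        by_contra hcon
        push_neg at hcon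
        have hwM : w ∈ M := Finset.mem_of_mem_erase hw
        have hwn : w ≤ n := (Finset.mem_Icc.mp (hMIcc w hwM)).2
        have hv1n := hMIcc v1 hv1M
        set y := w - v1 - (m - 3) with hydef
        have hy1 : 1 ≤ y := by omega
        have hyn : y ≤ n := by omega
        have hAcard : ({v1} : Finset ℕ).card = 1 := rfl
        have hAsum : (∑ v ∈ ({v1} : Finset ℕ), v) = v1 := Finset.sum_singleton _ _
        obtain ⟨a, hsol, hsub⟩ := exists_sol χ m n hm hn1 {v1} 1 hAcard (by omega)
          (by intro v hv; rw [Finset.mem_singleton] at hv; exact hv ▸ hv1n) y w hy1 hyn hwn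
          (by rw [hAsum]; omega)
        have hcu := hav a hsol
        have hbig : ({b, χ v1, χ w} : Finset ℕ) ⊆
            insert (χ 1) ((({v1} : Finset ℕ).image χ) ∪ {χ y, χ w}) := by
          intro u hu
          simp only [Finset.mem_insert, Finset.mem_singleton] at hu
          simp only [Finset.mem_insert, Finset.mem_union, Finset.mem_image,
            Finset.mem_singleton, hbdef]
          rcases hu with rfl | rfl | rfl
          · left; rfl
          · right; left; exact ⟨v1, rfl, rfl⟩
          · right; right; right; rfl
        have hc3 : ({b, χ v1, χ w} : Finset ℕ).card = 3 := by
          rw [Finset.card_insert_of_notMem, Finset.card_insert_of_notMem, Finset.card_singleton]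
          · rw [Finset.mem_singleton]
            intro h
            exact Finset.ne_of_mem_erase hw (hMinj v1 hv1M w hwM h).symm
          · simp only [Finset.mem_insert, Finset.mem_singleton]
            push_neg
            exact ⟨fun h => (hMn v1 hv1M).2.1 h.symm, fun h => (hMn w hwM).2.1 h.symm⟩
        have : 3 ≤ colorsUsed m χ a := by
          rw [← hc3]
          exact Finset.card_le_card (le_trans hbig (by exact hsub))
        omega
      have hEsub : M.erase v1 ⊆ Finset.Icc (v1 + 1) (v1 + (m - 3)) := by
        intro w hw
        have h0 := hEsub0 hw
        rw [Finset.mem_Ioc] at h0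
        exact Finset.mem_Icc.mpr ⟨by omega, hkey w hw⟩
      have := Finset.card_le_card hEsub
      rw [hEcard, Nat.card_Icc] at this
      simp only [show (3:ℕ) - 2 = 1 by rfl, show (3:ℕ) - 3 = 0 by rfl]
      omega
  · -- t ≥ 4
    have ht4 : 4 ≤ t := by omega
    obtain ⟨A, hAM, hAcard, hAlt⟩ := exists_bottom M (t - 3) (by omega)
    have hAne : A.Nonempty := by rw [← Finset.card_pos, hAcard]; omega
    set vs := A.max' hAne with hvsdef
    have hvsA : vs ∈ A := A.max'_mem hAne
    set A' := A.erase vs with hA'def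
    have hA'card : A'.card = t - 4 := by
      rw [hA'def, Finset.card_erase_of_mem hvsA, hAcard]; omega
    set σ' := ∑ x ∈ A', x with hσ'def
    have hSA : σ' + vs = ∑ x ∈ A, x := by
      rw [hσ'def, hA'def]
      exact Finset.sum_erase_add A (fun x => x) hvsA
    set SA := ∑ x ∈ A, x with hSAdef
    set θ := SA + (m - t + 1) with hθdef
    set E := M \ A with hEdef
    have hEcard : E.card + (t - 3) = r - 1 := by
      rw [hEdef, Finset.card_sdiff_of_subset hAM, hMcard, hAcard]
      have : t - 3 ≤ r - 1 := by omega
      omega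
    set e := E.card with hedef
    -- every element of E exceeds vs
    have hEgt : ∀ w ∈ E, vs < w := fun w hw => hAlt vs hvsA w hw
    -- D-related
    set Dset := insert b (A.image χ) with hDdef
    have hAimcard : (A.image χ).card = t - 3 := by
      rw [Finset.card_image_of_injOn, hAcard]
      intro w hw w' hw' h
      exact hMinj w (hAM hw) w' (hAM hw') h
    have hbnotA : b ∉ A.image χ := by
      rw [Finset.mem_image]
      rintro ⟨v, hv, hveq⟩
      exact (hMn v (hAM hv)).2.1 hveq
    have hDcard : Dset.card = t - 2 := by
      rw [hDdef, Finset.card_insert_of_notMem hbnotA, hAimcard]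
      omega
    have hEnotD : ∀ w ∈ E, χ w ∉ Dset := by
      intro w hw
      have hwM : w ∈ M := (Finset.mem_sdiff.mp hw).1
      have hwA : w ∉ A := (Finset.mem_sdiff.mp hw).2
      rw [hDdef]
      simp only [Finset.mem_insert, Finset.mem_image]
      push_neg
      refine ⟨(hMn w hwM).2.1, ?_⟩
      rintro v hv hveq
      exact hwA ((hMinj v (hAM hv) w hwM hveq) ▸ hv)
    set Dcells := (Finset.Icc 1 n).filter (fun z => χ z ∈ Dset) with hDcdef
    -- counting E vs Dcells
    have hdisj : Disjoint E Dcells := by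
      rw [Finset.disjoint_left]
      intro w hw hwD
      exact hEnotD w hw (Finset.mem_filter.mp hwD).2
    have hEDn : e + Dcells.card ≤ n := by
      have hsub : E ∪ Dcells ⊆ Finset.Icc 1 n := by
        intro w hw
        rcases Finset.mem_union.mp hw with h | h
        · exact hMIcc w (Finset.mem_sdiff.mp h).1
        · exact (Finset.mem_filter.mp h).1
      have := Finset.card_le_card hsub
      rw [Finset.card_union_of_disjoint hdisj, Nat.card_Icc] at this
      omega
    -- split E by θ
    have hsplit : (E.filter (fun w => w ≤ θ)).card + (E.filter (fun w => ¬ (w ≤ θ))).card = e :=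
      Finset.card_filter_add_card_filter_not _
    have hlow : (E.filter (fun w => w ≤ θ)).card ≤ σ' + (m - t + 1) := by
      have hsub : E.filter (fun w => w ≤ θ) ⊆ Finset.Ioc vs θ := by
        intro w hw
        rw [Finset.mem_filter] at hw
        exact Finset.mem_Ioc.mpr ⟨hEgt w hw.1, hw.2⟩
      have := Finset.card_le_card hsub
      rw [Nat.card_Ioc] at this
      omega
    have hhigh : (E.filter (fun w => ¬ (w ≤ θ))).card ≤ Dcells.card := by
      apply Finset.card_le_card_of_injOn (fun w => w - θ)
      · intro w hw
        rw [Finset.mem_coe, Finset.mem_filter] at hw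
        obtain ⟨hwE, hwθ⟩ := hw
        push_neg at hwθ
        have hwM : w ∈ M := (Finset.mem_sdiff.mp hwE).1
        have hwA : w ∉ A := (Finset.mem_sdiff.mp hwE).2
        have hwn : w ≤ n := (Finset.mem_Icc.mp (hMIcc w hwM)).2
        set y := w - θ with hydef
        have hy1 : 1 ≤ y := by omega
        have hyn : y ≤ n := by omega
        obtain ⟨a, hsol, hsub⟩ := exists_sol χ m n hm hn1 A (t - 3) hAcard (by omega)
          (fun v hv => hMIcc v (hAM hv)) y w hy1 hyn hwn
          (by rw [← hSAdef]; omega)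
        have hcu := hav a hsol
        -- χ y must be in Dset
        have hχw : χ w ∉ Dset := hEnotD w hwE
        have hχyw : χ y ≠ χ w := by
          intro h
          have hyIcc : y ∈ Finset.Icc 1 n := Finset.mem_Icc.mpr ⟨hy1, hyn⟩
          have := hMmin w hwM y hyIcc h
          omega
        show y ∈ Dcells
        rw [hDcdef, Finset.mem_filter]
        refine ⟨Finset.mem_Icc.mpr ⟨hy1, hyn⟩, ?_⟩
        by_contra hyD
        -- then t distinct colors
        have hbigsub : insert (χ y) (insert (χ w) Dset) ⊆
            insert (χ 1) ((A.image χ) ∪ {χ y, χ w}) := by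
          intro u hu
          simp only [Finset.mem_insert, hDdef] at hu
          simp only [Finset.mem_insert, Finset.mem_union, Finset.mem_image,
            Finset.mem_singleton, hbdef]
          rcases hu with rfl | rfl | rfl | hu
          · right; right; left; rfl
          · right; right; right; rfl
          · left; rfl
          · right; left; exact Finset.mem_image.mp hu
        have hbigcard : t ≤ (insert (χ y) (insert (χ w) Dset)).card := by
          rw [Finset.card_insert_of_notMem, Finset.card_insert_of_notMem hχw, hDcard]
          · omega
          · rw [Finset.mem_insert]
            push_neg
            exact ⟨hχyw, hyD⟩
        have : t ≤ colorsUsed m χ a := le_trans hbigcard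
          (Finset.card_le_card (le_trans hbigsub hsub))
        omega
      · intro w hw w' hw' h
        rw [Finset.mem_coe, Finset.mem_filter] at hw hw'
        have h1 := hw.2; have h2 := hw'.2
        have h' : w - θ = w' - θ := h
        simp only [not_le] at h1 h2
        omega
    -- main counting inequality
    have hA2e : 2 * e ≤ σ' + (m - t + 1) + n := by omega
    -- the sum bound on A'
    have hB' : 2 * σ' + (t - 4) * (t - 5) + 2 * (t - 4) * r ≤ 2 * (t - 4) * (n + t - 3) := by
      by_cases ht5 : t = 4
      · have : A' = ∅ := Finset.card_eq_zero.mp (by omega)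
        have hσ0 : σ' = 0 := by rw [hσ'def, this, Finset.sum_empty]
        subst ht5
        simp [hσ0]
      · have ht5' : 5 ≤ t := by omega
        have hA'ne : A'.Nonempty := by rw [← Finset.card_pos, hA'card]; omega
        have hpoint : ∀ x ∈ A', x + (e + 1) ≤ n := by
          intro x hx
          have hxA : x ∈ A := Finset.mem_of_mem_erase hx
          have hBsub : insert vs E ⊆ Finset.Ioc x n := by
            intro z hz
            rcases Finset.mem_insert.mp hz with rfl | hzE
            · have h1 : x ≤ vs := A.le_max' x hxA
              have h2 : x ≠ vs := Finset.ne_of_mem_erase hx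
              exact Finset.mem_Ioc.mpr ⟨by omega, (Finset.mem_Icc.mp (hMIcc vs (hAM hvsA))).2⟩
            · exact Finset.mem_Ioc.mpr ⟨hAlt x hxA z hzE,
                (Finset.mem_Icc.mp (hMIcc z (Finset.mem_sdiff.mp hzE).1)).2⟩
          have hvsE : vs ∉ E := by
            rw [hEdef, Finset.mem_sdiff]
            push_neg
            intro _; exact hvsA
          have := Finset.card_le_card hBsub
          rw [Finset.card_insert_of_notMem hvsE, Nat.card_Ioc] at this
          omega
        obtain ⟨x0, hx0⟩ := hA'ne
        have hx0n := hpoint x0 hx0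
        have hx01 : 1 ≤ x0 := (Finset.mem_Icc.mp (hMIcc x0 (hAM (Finset.mem_of_mem_erase hx0)))).1
        set Q := n - (e + 1) with hQdef
        have hQe : Q + (e + 1) = n := by omega
        have hsb := sum_le_distinct Q A' (fun x hx => by have := hpoint x hx; omega)
        rw [hA'card] at hsb
        have h45 : t - 4 - 1 = t - 5 := by omega
        rw [h45] at hsb
        have hQr : Q + r = n + t - 3 := by omega
        calc 2 * σ' + (t - 4) * (t - 5) + 2 * (t - 4) * r
            ≤ 2 * (t - 4) * Q + 2 * (t - 4) * r := by rw [hσ'def] at *; omega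
          _ = 2 * (t - 4) * (Q + r) := by ring
          _ = 2 * (t - 4) * (n + t - 3) := by rw [hQr]
    -- final arithmetic
    obtain ⟨τ, hτ⟩ : ∃ τ, t = τ + 4 := ⟨t - 4, by omega⟩
    obtain ⟨μm, hμm⟩ : ∃ μm, m = μm + t := ⟨m - t, by omega⟩
    have he2 : e + t = r + 2 := by omega
    have egoal : (t - 2) * r + 1 ≤ (t - 3) * n + (T + m - t) := by
      have ht2 : t - 2 = τ + 2 := by omega
      have ht3' : t - 3 = τ + 1 := by omega
      have ht4' : t - 4 = τ := by omega
      have ht5' : t - 5 = τ - 1 := by omega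
      have hmt : m - t + 1 = μm + 1 := by omega
      have hTm : T + m - t = T + μm := by omega
      have hττ : τ * (τ - 1) + τ = τ * τ := by
        cases τ with
        | zero => rfl
        | succ k => simp only [Nat.add_sub_cancel]; ring
      rw [ht2, ht3', hTm]
      rw [ht4', ht5'] at hB'
      rw [hmt] at hA2e
      have hr : r = e + τ + 2 := by omega
      have h43 : τ + 4 - 1 = τ + 3 := by omega
      rw [hτ, h43] at hT2
      have hnt3 : n + t - 3 = n + τ + 1 := by omega
      rw [hnt3, hr] at hB'
      rw [hr]
      linarith [hA2e, hB', hττ, hT2]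
    omega

lemma construction_avoids (m t n r : ℕ) (hm : 4 ≤ m) (ht : 3 ≤ t) (htm : t ≤ m)
    (hr1 : 1 ≤ r) (hrn : r ≤ n)
    (hineq : (t - 2) * r + 1 ≤ (t - 3) * n + (t * (t - 1) / 2 + m - t)) :
    ∃ χ : ℕ → ℕ, ExactColoring n r χ ∧
      ∀ a : ℕ → ℕ, IsSolutionEm m n a → colorsUsed m χ a < t := by
  set T := t * (t - 1) / 2 with hTdef
  have hT2 : 2 * T = t * (t - 1) := by
    rw [hTdef]
    refine Nat.two_mul_div_two_of_even ?_
    have h : t - 1 + 1 = t := by omega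
    have := Nat.even_mul_succ_self (t - 1)
    rwa [h, mul_comm] at this
  set g := n - r + 1 with hgdef
  have hg : g + r = n + 1 := by omega
  have hg1 : 1 ≤ g := by omega
  set χ : ℕ → ℕ := fun x => if x ≤ g then 1 else x - g + 1 with hχdef
  refine ⟨χ, ⟨?_, ?_⟩, ?_⟩
  · intro x hx
    rw [Finset.mem_Icc] at hx
    rw [hχdef]
    simp only []
    by_cases h : x ≤ g
    · rw [if_pos h, Finset.mem_Icc]; omega
    · rw [if_neg h, Finset.mem_Icc]; omega
  · intro c hc
    rw [Finset.mem_Icc] at hc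
    by_cases h : c = 1
    · refine ⟨1, Finset.mem_Icc.mpr ⟨le_refl 1, by omega⟩, ?_⟩
      rw [hχdef]; simp only []; rw [if_pos hg1]; omega
    · refine ⟨g + c - 1, Finset.mem_Icc.mpr ⟨by omega, by omega⟩, ?_⟩
      rw [hχdef]; simp only []; rw [if_neg (by omega)]; omega
  · intro a hsol
    by_contra hcon
    push_neg at hcon
    set S := Finset.Icc 1 (m - 1) with hSdef
    set Sbig := S.filter (fun i => g < a i) with hSbigdef
    set K := Sbig.image a with hKdef
    have haIcc : ∀ i ∈ S, a i ∈ Finset.Icc 1 n := by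
      intro i hi
      rw [hSdef, Finset.mem_Icc] at hi
      exact hsol.1 i (Finset.mem_Icc.mpr ⟨hi.1, by omega⟩)
    -- colorsUsed ≤ K.card + 2
    have hsub : (Finset.Icc 1 m).image (fun i => χ (a i)) ⊆
        insert 1 (insert (χ (a m)) (K.image χ)) := by
      intro u hu
      obtain ⟨i, hi, rfl⟩ := Finset.mem_image.mp hu
      rw [Finset.mem_Icc] at hi
      by_cases him : i = m
      · subst him
        exact Finset.mem_insert_of_mem (Finset.mem_insert_self _ _)
      · have hiS : i ∈ S := by rw [hSdef, Finset.mem_Icc]; omega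
        by_cases hbig : g < a i
        · have : a i ∈ K := Finset.mem_image_of_mem a
            (Finset.mem_filter.mpr ⟨hiS, hbig⟩)
          simp only [Finset.mem_insert]
          right; right
          exact Finset.mem_image_of_mem χ this
        · have : χ (a i) = 1 := by
            rw [hχdef]; simp only []; rw [if_pos (by omega)]
          simp only [Finset.mem_insert]
          left; exact this
    have hKcard : t - 2 ≤ K.card := by
      have h1 := Finset.card_le_card hsub
      have h2 : (insert 1 (insert (χ (a m)) (K.image χ))).card ≤ K.card + 2 := by
        calc (insert 1 (insert (χ (a m)) (K.image χ))).card
            ≤ (insert (χ (a m)) (K.image χ)).card + 1 := Finset.card_insert_le _ _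
          _ ≤ (K.image χ).card + 1 + 1 := by
              have := Finset.card_insert_le (χ (a m)) (K.image χ); omega
          _ ≤ K.card + 2 := by have := Finset.card_image_le (s := K) (f := χ); omega
      have h3 : t ≤ colorsUsed m χ a := hcon
      rw [colorsUsed] at h3
      omega
    obtain ⟨K', hK'K, hK'card⟩ := Finset.exists_subset_card_eq hKcard
    have hKg : ∀ x ∈ K, g + 1 ≤ x := by
      intro x hx
      obtain ⟨i, hi, rfl⟩ := Finset.mem_image.mp hx
      have := (Finset.mem_filter.mp hi).2
      omega
    have hK'g : ∀ x ∈ K', g + 1 ≤ x := fun x hx => hKg x (hK'K hx)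
    have hlem1 := sum_ge_distinct g K' hK'g
    rw [hK'card] at hlem1
    -- sum chain
    have hsum1 : ∑ i ∈ S, a i = a m := hsol.2
    have hsplit : ∑ i ∈ S \ Sbig, a i + ∑ i ∈ Sbig, a i = ∑ i ∈ S, a i :=
      Finset.sum_sdiff (Finset.filter_subset _ _)
    have hrest : (S \ Sbig).card ≤ ∑ i ∈ S \ Sbig, a i := by
      have h := Finset.card_nsmul_le_sum (S \ Sbig) a 1 (fun i hi => by
        have hiS : i ∈ S := (Finset.mem_sdiff.mp hi).1
        have := Finset.mem_Icc.mp (haIcc i hiS)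
        omega)
      simpa using h
    have hfib : (∑ x ∈ K, x) + Sbig.card ≤ (∑ i ∈ Sbig, a i) + K.card := by
      have := fiberwise_sum Sbig a (fun i hi => by
        have hiS : i ∈ S := Finset.mem_of_mem_filter i hi
        have := Finset.mem_Icc.mp (haIcc i hiS)
        omega)
      rw [← hKdef] at this
      exact this
    have hKsplit : ∑ x ∈ K \ K', x + ∑ x ∈ K', x = ∑ x ∈ K, x :=
      Finset.sum_sdiff hK'K
    have hKrest : (K \ K').card ≤ ∑ x ∈ K \ K', x := by
      have h := Finset.card_nsmul_le_sum (K \ K') (fun x => x) 1 (fun x hx => by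
        have := hKg x (Finset.mem_sdiff.mp hx).1
        show (1:ℕ) ≤ x
        omega)
      simpa using h
    have hKK'card : (K \ K').card = K.card - (t - 2) := by
      rw [Finset.card_sdiff_of_subset hK'K, hK'card]
    have hScard : S.card = m - 1 := by rw [hSdef, Nat.card_Icc]; omega
    have hSbigcard : Sbig.card ≤ m - 1 := by
      rw [← hScard]; exact Finset.card_le_card (Finset.filter_subset _ _)
    have hSbS : (S \ Sbig).card = S.card - Sbig.card :=
      Finset.card_sdiff_of_subset (Finset.filter_subset _ _)
    have ham : (∑ x ∈ K', x) + (m - t + 1) ≤ a m := by omega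
    have hamn : a m ≤ n := by
      have := hsol.1 m (Finset.mem_Icc.mpr ⟨by omega, le_refl m⟩)
      exact (Finset.mem_Icc.mp this).2
    -- final numeric contradiction
    obtain ⟨τ, rfl⟩ : ∃ τ, t = τ + 3 := ⟨t - 3, by omega⟩
    obtain ⟨μm, hμm⟩ : ∃ μm, m = μm + (τ + 3) := ⟨m - (τ + 3), by omega⟩
    have e1 : τ + 3 - 2 = τ + 1 := by omega
    have e2 : τ + 3 - 3 = τ := by omega
    have e3 : τ + 3 - 1 = τ + 2 := by omega
    rw [e1, e2] at hineq
    rw [e1] at hlem1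
    rw [e3] at hT2
    have hμm1 : m - (τ + 3) + 1 = μm + 1 := by omega
    rw [hμm1] at ham
    have hTm : T + m - (τ + 3) = T + μm := by omega
    rw [hTm] at hineq
    have hgr : 2 * (τ + 1) * g + 2 * (τ + 1) * r = 2 * (τ + 1) * (n + 1) := by
      calc 2 * (τ + 1) * g + 2 * (τ + 1) * r = 2 * (τ + 1) * (g + r) := by ring
        _ = 2 * (τ + 1) * (n + 1) := by rw [hg]
    linarith [hineq, hlem1, hT2, ham, hamn, hgr]

end WRSVAux

/-- For m ≥ 4, 3 ≤ t ≤ m and n ≥ t(t−1)/2 + m − t, the weakened rainbow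
Schur number satisfies RS_{t,m}(n) = ⌈((t−3)n + t(t−1)/2 + m − t)/(t−2)⌉: this ceiling is
the least number of colors r ≥ 1 such that every exact r-coloring of [1,n] contains a
solution to E_m using at least t colors. -/
theorem weak_rainbow_schur_value (m t n : ℕ) (hm : 4 ≤ m) (ht : 3 ≤ t) (htm : t ≤ m)
    (hn : t * (t - 1) / 2 + m - t ≤ n) :
    ∃ R : ℕ,
      (R : ℤ) = ⌈(((t : ℚ) - 3) * n + (t : ℚ) * ((t : ℚ) - 1) / 2 + (m : ℚ) - (t : ℚ)) /
        ((t : ℚ) - 2)⌉ ∧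
      IsLeast {r : ℕ | 1 ≤ r ∧ HasWeakProp m t n r} R := by
  have hT2 : 2 * (t * (t - 1) / 2) = t * (t - 1) := by
    refine Nat.two_mul_div_two_of_even ?_
    have h : t - 1 + 1 = t := by omega
    have := Nat.even_mul_succ_self (t - 1)
    rwa [h, mul_comm] at this
  have h6 : 6 ≤ t * (t - 1) := by
    calc (6:ℕ) = 3 * 2 := rfl
    _ ≤ t * (t - 1) := Nat.mul_le_mul (by omega) (by omega)
  set N := (t - 3) * n + (t * (t - 1) / 2 + m - t) with hNdef
  have hN1 : 1 ≤ N := by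
    have : 3 ≤ t * (t - 1) / 2 + m - t := by omega
    omega
  set R := (N + (t - 2) - 1) / (t - 2) with hRdef
  have hdm := Nat.div_add_mod (N + (t - 2) - 1) (t - 2)
  have hmod : (N + (t - 2) - 1) % (t - 2) < t - 2 := Nat.mod_lt _ (by omega)
  rw [← hRdef] at hdm
  -- key product facts
  have hR1 : N ≤ (t - 2) * R := by
    rcases Nat.lt_or_ge N ((t-2) * R + 1) with h | h
    · omega
    · exfalso; omega
  have hR2 : (t - 2) * R ≤ N + t - 3 := by omega
  have hRpos : 1 ≤ R := by
    rcases Nat.eq_zero_or_pos R with h | h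
    · rw [h, Nat.mul_zero] at hR1; omega
    · exact h
  have hcastN : ((N : ℚ)) = ((t : ℚ) - 3) * n + (t : ℚ) * ((t : ℚ) - 1) / 2 + (m : ℚ) - (t : ℚ) := by
    have hTQ : ((t * (t - 1) / 2 : ℕ) : ℚ) = (t : ℚ) * ((t : ℚ) - 1) / 2 := by
      have h2 : ((2 * (t * (t - 1) / 2) : ℕ) : ℚ) = ((t * (t - 1) : ℕ) : ℚ) := by
        rw [hT2]
      push_cast at h2
      rw [Nat.cast_sub (by omega : 1 ≤ t)] at h2
      push_cast at h2 ⊢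
      linarith
    have h3t : ((t - 3 : ℕ) : ℚ) = (t : ℚ) - 3 := by
      rw [Nat.cast_sub (by omega : 3 ≤ t)]; norm_num
    have hsplit : N = ((t - 3) * n + (t * (t - 1) / 2 + m)) - t := by omega
    have htle : t ≤ (t - 3) * n + (t * (t - 1) / 2 + m) := by omega
    rw [hsplit, Nat.cast_sub htle]
    push_cast [h3t, hTQ]
    ring
  refine ⟨R, ?_, ⟨?_, ?_⟩, ?_⟩
  · -- ceiling identity
    rw [show (((t : ℚ) - 3) * n + (t : ℚ) * ((t : ℚ) - 1) / 2 + (m : ℚ) - (t : ℚ)) = (N : ℚ)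
      from hcastN.symm]
    have hden : (0:ℚ) < (t : ℚ) - 2 := by
      have : (3:ℚ) ≤ (t:ℚ) := by exact_mod_cast ht
      linarith
    symm
    rw [Int.ceil_eq_iff]
    constructor
    · rw [lt_div_iff₀ hden]
      have : ((t - 2) * R : ℕ) ≤ (N : ℕ) + t - 3 := hR2
      have hc : ((t:ℚ) - 2) * R ≤ (N:ℚ) + (t:ℚ) - 3 := by
        have h1 : (((t - 2) * R : ℕ) : ℚ) = ((t:ℚ) - 2) * R := by
          rw [Nat.cast_mul, Nat.cast_sub (by omega : 2 ≤ t)]; norm_num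
        have h2 : ((N + t - 3 : ℕ) : ℚ) = (N:ℚ) + (t:ℚ) - 3 := by
          rw [show N + t - 3 = N + (t - 3) by omega, Nat.cast_add,
            Nat.cast_sub (by omega : 3 ≤ t)]
          ring
        calc ((t:ℚ) - 2) * R = (((t - 2) * R : ℕ) : ℚ) := h1.symm
          _ ≤ ((N + t - 3 : ℕ) : ℚ) := by exact_mod_cast this
          _ = (N:ℚ) + (t:ℚ) - 3 := h2
      have ht3 : (3:ℚ) ≤ (t:ℚ) := by exact_mod_cast ht
      push_cast
      nlinarith [hc]
    · rw [div_le_iff₀ hden]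
      have hc : (N : ℚ) ≤ ((t:ℚ) - 2) * R := by
        have h1 : (((t - 2) * R : ℕ) : ℚ) = ((t:ℚ) - 2) * R := by
          rw [Nat.cast_mul, Nat.cast_sub (by omega : 2 ≤ t)]; norm_num
        calc (N:ℚ) ≤ (((t - 2) * R : ℕ) : ℚ) := by exact_mod_cast hR1
          _ = ((t:ℚ) - 2) * R := h1
      push_cast
      linarith [hc]
  · -- 1 ≤ R
    exact hRpos
  · -- HasWeakProp at R
    intro χ hχ
    by_contra hno
    push_neg at hno
    have hav : ∀ a : ℕ → ℕ, IsSolutionEm m n a → colorsUsed m χ a < t := by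
      intro a hsol
      have := hno a hsol
      omega
    have hub := avoid_bound m t n R χ hm ht htm hn hχ hav
    rw [← hNdef] at hub
    omega
  · -- lower bound
    rintro r ⟨hr1, hwp⟩
    by_contra hlt
    push_neg at hlt
    have hrR : r + 1 ≤ R := hlt
    have hmul : (t - 2) * r + (t - 2) ≤ (t - 2) * R := by
      calc (t - 2) * r + (t - 2) = (t - 2) * (r + 1) := by ring
        _ ≤ (t - 2) * R := Nat.mul_le_mul_left _ hrR
    have hineq_r : (t - 2) * r + 1 ≤ N := by omega
    have hNn : N ≤ (t - 2) * n := by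
      have h1 : (t - 2) * n = (t - 3) * n + n := by
        have : t - 2 = (t - 3) + 1 := by omega
        rw [this]; ring
      omega
    have hrn : r ≤ n := by
      have h2 : (t - 2) * r < (t - 2) * n := by omega
      exact le_of_lt (Nat.lt_of_mul_lt_mul_left h2)
    obtain ⟨χr, hexact, havoidr⟩ := construction_avoids m t n r hm ht htm hr1 hrn
      (by rw [← hNdef]; exact hineq_r)
    obtain ⟨a, hsol, hcol⟩ := hwp χr hexact
    have := havoidr a hsol
    omega
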